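/- Gaussian lower bound on perturbed densities: if S has mean 0 and variance at most K, and X = S + Z with Z ~ N(0,τ) independent of S, then the density p of X satisfies p(u) ≥ (2 exp(2K/τ))^{−1} φ_{τ/2}(u) for all u, where φ_{τ/2} is the N(0, τ/2) density. -/

import Mathlib

open MeasureTheory Real

/-- The centered Gaussian density with variance `t`. -/
noncomputable def gauss (t x : ℝ) : ℝ :=
  (Real.sqrt (2 * Real.pi * t))⁻¹ * Real.exp (-(x ^ 2) / (2 * t))

/-- Gaussian lower bound on normally perturbed densities:
`p(u) ≥ (2 exp(2K/τ))⁻¹ φ_{τ/2}(u)`. -/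
theorem stmt6 (μ : Measure ℝ) [IsProbabilityMeasure μ] (τ K : ℝ) (hτ : 0 < τ)
    (hint : Integrable (fun s => s) μ) (hint2 : Integrable (fun s => s ^ 2) μ)
    (hmean : ∫ s, s ∂μ = 0) (hvar : ∫ s, s ^ 2 ∂μ ≤ K)
    (p : ℝ → ℝ) (hp : ∀ x, p x = ∫ s, gauss τ (x - s) ∂μ) :
    ∀ u, (2 * Real.exp (2 * K / τ))⁻¹ * gauss (τ / 2) u ≤ p u := by
  intro u
  have hπ : (0:ℝ) < Real.pi := Real.pi_pos
  set V := ∫ s, s ^ 2 ∂μ with hV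
  have hV0 : 0 ≤ V := integral_nonneg fun s => sq_nonneg s
  have hK0 : 0 ≤ K := le_trans hV0 hvar
  have hA : 0 < Real.sqrt (2 * Real.pi * τ) := Real.sqrt_pos.2 (by positivity)
  set c : ℝ := (Real.sqrt (2 * Real.pi * τ))⁻¹ * Real.exp (-(u ^ 2) / τ) with hc
  have hc0 : 0 < c := by positivity
  -- pointwise lower bound on gauss
  have hpt : ∀ s : ℝ, c * Real.exp (-(s ^ 2) / τ) ≤ gauss τ (u - s) := by
    intro s
    rw [gauss, hc, mul_assoc, ← Real.exp_add]
    have h1 : -(u ^ 2) / τ + -(s ^ 2) / τ ≤ -((u - s) ^ 2) / (2 * τ) := by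
      rw [← add_div, div_le_div_iff₀ (by positivity) (by positivity)]
      nlinarith [sq_nonneg (u + s)]
    exact mul_le_mul_of_nonneg_left (Real.exp_le_exp.2 h1) (by positivity)
  -- integrability facts
  have hcont : Continuous fun s : ℝ => Real.exp (-(s ^ 2) / τ) := by fun_prop
  have hintE : Integrable (fun s : ℝ => Real.exp (-(s ^ 2) / τ)) μ := by
    apply (integrable_const (1:ℝ)).mono' hcont.aestronglyMeasurable
    filter_upwards with s
    rw [Real.norm_eq_abs, abs_of_pos (Real.exp_pos _)]
    exact Real.exp_le_one_iff.2
      (div_nonpos_iff.2 (Or.inr ⟨neg_nonpos.2 (sq_nonneg _), hτ.le⟩))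
  have hcontg : Continuous fun s : ℝ => gauss τ (u - s) := by
    unfold gauss; fun_prop
  have hintg : Integrable (fun s : ℝ => gauss τ (u - s)) μ := by
    apply (integrable_const ((Real.sqrt (2 * Real.pi * τ))⁻¹)).mono'
      hcontg.aestronglyMeasurable
    filter_upwards with s
    rw [gauss, Real.norm_eq_abs, abs_of_pos (by positivity)]
    have h1 : Real.exp (-((u - s) ^ 2) / (2 * τ)) ≤ 1 :=
      Real.exp_le_one_iff.2
        (div_nonpos_iff.2 (Or.inr ⟨neg_nonpos.2 (sq_nonneg _), by positivity⟩))
    nlinarith [inv_pos.2 hA]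
  -- Jensen (tangent line) bound
  have hJ : Real.exp (-(V / τ)) ≤ ∫ s, Real.exp (-(s ^ 2) / τ) ∂μ := by
    have hlow : ∀ s : ℝ,
        Real.exp (-(V / τ)) * ((1 + V / τ) - s ^ 2 / τ) ≤ Real.exp (-(s ^ 2) / τ) := by
      intro s
      have h0 := Real.add_one_le_exp (-(s ^ 2) / τ + V / τ)
      have h2 : Real.exp (-(s ^ 2) / τ) =
          Real.exp (-(V / τ)) * Real.exp (-(s ^ 2) / τ + V / τ) := by
        rw [← Real.exp_add]; ring_nf
      rw [h2]
      have h3 := mul_le_mul_of_nonneg_left h0 (le_of_lt (Real.exp_pos (-(V / τ))))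
      calc Real.exp (-(V / τ)) * ((1 + V / τ) - s ^ 2 / τ)
          = Real.exp (-(V / τ)) * (-(s ^ 2) / τ + V / τ + 1) := by ring
        _ ≤ _ := h3
    have hintlow : Integrable
        (fun s : ℝ => Real.exp (-(V / τ)) * ((1 + V / τ) - s ^ 2 / τ)) μ := by
      apply Integrable.const_mul
      exact (integrable_const _).sub (hint2.div_const τ)
    calc Real.exp (-(V / τ))
        = ∫ s, Real.exp (-(V / τ)) * ((1 + V / τ) - s ^ 2 / τ) ∂μ := by
          rw [integral_const_mul, integral_sub (integrable_const _) (hint2.div_const τ),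
            integral_const, integral_div, ← hV]
          simp
      _ ≤ ∫ s, Real.exp (-(s ^ 2) / τ) ∂μ :=
          integral_mono hintlow hintE hlow
  -- main chain
  have hmain : c * Real.exp (-(V / τ)) ≤ p u := by
    rw [hp u]
    calc c * Real.exp (-(V / τ)) ≤ c * ∫ s, Real.exp (-(s ^ 2) / τ) ∂μ :=
          mul_le_mul_of_nonneg_left hJ hc0.le
      _ = ∫ s, c * Real.exp (-(s ^ 2) / τ) ∂μ := (integral_const_mul _ _).symm
      _ ≤ ∫ s, gauss τ (u - s) ∂μ := integral_mono (hintE.const_mul c) hintg hpt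
  refine le_trans ?_ hmain
  -- final algebraic comparison
  rw [gauss, hc]
  have h2τ : 2 * (τ / 2) = τ := by ring
  rw [h2τ]
  have hB : 0 < Real.sqrt (2 * Real.pi * (τ / 2)) := Real.sqrt_pos.2 (by positivity)
  set a := Real.sqrt (2 * Real.pi * τ) with ha
  set b := Real.sqrt (2 * Real.pi * (τ / 2)) with hb
  have hab : a ≤ 2 * b := by
    have ha2 : a ^ 2 = 2 * Real.pi * τ := Real.sq_sqrt (by positivity)
    have hb2 : b ^ 2 = 2 * Real.pi * (τ / 2) := Real.sq_sqrt (by positivity)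
    nlinarith [sq_nonneg (a - 2 * b), hA, hB]
  have hVK : Real.exp (-(K / τ)) ≤ Real.exp (-(V / τ)) :=
    Real.exp_le_exp.2 (neg_le_neg (by gcongr))
  refine le_trans ?_ (mul_le_mul_of_nonneg_left hVK (by positivity))
  rw [mul_inv]
  have hexp : (Real.exp (2 * K / τ))⁻¹ = Real.exp (-(2 * K / τ)) := by
    rw [← Real.exp_neg]
  rw [hexp]
  have hEu : 0 < Real.exp (-(u ^ 2) / τ) := Real.exp_pos _
  rw [show (2:ℝ)⁻¹ * Real.exp (-(2 * K / τ)) * (b⁻¹ * Real.exp (-(u ^ 2) / τ))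
      = Real.exp (-(u ^ 2) / τ) * ((2:ℝ)⁻¹ * Real.exp (-(2 * K / τ)) * b⁻¹) by ring,
    show a⁻¹ * Real.exp (-(u ^ 2) / τ) * Real.exp (-(K / τ))
      = Real.exp (-(u ^ 2) / τ) * (a⁻¹ * Real.exp (-(K / τ))) by ring]
  apply mul_le_mul_of_nonneg_left _ hEu.le
  have h1 : Real.exp (-(2 * K / τ)) ≤ Real.exp (-(K / τ)) := by
    apply Real.exp_le_exp.2
    have hKτ : 0 ≤ K / τ := div_nonneg hK0 hτ.le
    have h2 : 2 * K / τ = 2 * (K / τ) := by ring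
    rw [h2]; linarith
  have h2 : (2:ℝ)⁻¹ * b⁻¹ ≤ a⁻¹ := by
    rw [← mul_inv]
    exact inv_anti₀ hA hab
  calc (2:ℝ)⁻¹ * Real.exp (-(2 * K / τ)) * b⁻¹
      ≤ (2:ℝ)⁻¹ * Real.exp (-(K / τ)) * b⁻¹ := by
        apply mul_le_mul_of_nonneg_right (mul_le_mul_of_nonneg_left h1 (by norm_num))
          (inv_pos.2 hB).le
    _ = ((2:ℝ)⁻¹ * b⁻¹) * Real.exp (-(K / τ)) := by ring
    _ ≤ a⁻¹ * Real.exp (-(K / τ)) :=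
        mul_le_mul_of_nonneg_right h2 (Real.exp_pos _).le
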